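/- If (σ, τ) is a covering pair of the Bruhat order on S_m (so τ = tσ for a single transposition t), then for every cache size c ≤ m the number of cache hits changes by at most one: |hits_c(τ) − hits_c(σ)| ≤ 1. -/

import Mathlib

/-- `x` is an adjacent transposition `(i, i+1)` in the symmetric group on `Fin m`. -/
def IsAdjSwap {m : ℕ} (x : Equiv.Perm (Fin m)) : Prop :=
  ∃ i j : Fin m, (j : ℕ) = (i : ℕ) + 1 ∧ x = Equiv.swap i j

/-- `len σ` is the minimal number of adjacent transpositions whose product is `σ`
(the Coxeter length of `σ` in `S_m`). -/
noncomputable def len {m : ℕ} (σ : Equiv.Perm (Fin m)) : ℕ :=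
  sInf {n | ∃ l : List (Equiv.Perm (Fin m)),
    (∀ x ∈ l, IsAdjSwap x) ∧ l.prod = σ ∧ l.length = n}

/-- `l` is a reduced word for `w`: a product of `len w` adjacent transpositions equal to `w`. -/
def IsReducedWord {m : ℕ} (l : List (Equiv.Perm (Fin m))) (w : Equiv.Perm (Fin m)) : Prop :=
  (∀ x ∈ l, IsAdjSwap x) ∧ l.prod = w ∧ l.length = len w

/-- The Bruhat order on `S_m`: `u ≤ w` iff some reduced word for `w` contains a subword
that is a reduced word for `u`. -/
def BruhatLE {m : ℕ} (u w : Equiv.Perm (Fin m)) : Prop :=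
  ∃ lw, IsReducedWord lw w ∧ ∃ lu, lu.Sublist lw ∧ IsReducedWord lu u

/-- Strict Bruhat order. -/
def BruhatLT {m : ℕ} (u w : Equiv.Perm (Fin m)) : Prop :=
  BruhatLE u w ∧ u ≠ w

/-- `τ` covers `σ` in the Bruhat order: `σ < τ` with no element strictly in between. -/
def BruhatCov {m : ℕ} (σ τ : Equiv.Perm (Fin m)) : Prop :=
  BruhatLT σ τ ∧ ¬ ∃ u, BruhatLT σ u ∧ BruhatLT u τ

/-- The reuse distance of the `i`-th access of the re-traversal `B = σ(A)` in the trace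
`T = A B`, where `A` accesses items `1, …, m` in order (here 0-indexed over `Fin m`):
`rd(σ, i) = 1 + (m − σ(i)) + #{j < i : σ(j) < σ(i)}` in 1-indexed terms. -/
def rd {m : ℕ} (σ : Equiv.Perm (Fin m)) (i : Fin m) : ℕ :=
  (m - (σ i : ℕ)) + (Finset.univ.filter (fun j : Fin m => j < i ∧ σ j < σ i)).card

/-- The number of cache hits of the re-traversal `σ` for a fully associative LRU cache
of size `c`: the `i`-th access of `B` is a hit iff `rd(σ, i) ≤ c`. -/
def hits {m : ℕ} (c : ℕ) (σ : Equiv.Perm (Fin m)) : ℕ :=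
  (Finset.univ.filter (fun i : Fin m => rd σ i ≤ c)).card



section BruhatAux

variable {m : ℕ}

/-- number of inversions -/
def pinv (w : Equiv.Perm (Fin m)) : ℕ :=
  (Finset.univ.filter (fun z : Fin m × Fin m => z.1 < z.2 ∧ w z.2 < w z.1)).card

lemma swap_val (c c' a : Fin m) :
    ((Equiv.swap c c' a : Fin m) : ℕ) =
      if (a : ℕ) = c then (c' : ℕ) else if (a : ℕ) = (c' : ℕ) then (c : ℕ) else a := by
  rcases eq_or_ne a c with rfl | h1
  · simp [Equiv.swap_apply_left]
  · rcases eq_or_ne a c' with rfl | h2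
    · rcases eq_or_ne a c with rfl | h3
      · simp
      · rw [Equiv.swap_apply_right, if_neg (fun hh => h3 (Fin.ext hh)), if_pos rfl]
    · rw [Equiv.swap_apply_of_ne_of_ne h1 h2,
        if_neg (fun hh => h1 (Fin.ext hh)), if_neg (fun hh => h2 (Fin.ext hh))]

lemma adjswap_lt {c c' i j : Fin m} (hcc : (c' : ℕ) = c + 1) (hij : i < j)
    (hne : ¬(i = c ∧ j = c')) : Equiv.swap c c' i < Equiv.swap c c' j := by
  have hij' : (i : ℕ) < j := hij
  have hne' : ¬((i : ℕ) = c ∧ (j : ℕ) = c') :=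
    fun ⟨a, b⟩ => hne ⟨Fin.ext a, Fin.ext b⟩
  rw [Fin.lt_def, swap_val, swap_val]
  split_ifs <;> omega

lemma pinv_swap_adj_descent {w : Equiv.Perm (Fin m)} {c c' : Fin m}
    (hcc : (c' : ℕ) = c + 1) (hd : w c' < w c) :
    pinv (w * Equiv.swap c c') + 1 = pinv w := by
  classical
  set s := Equiv.swap c c' with hs
  set x := w * s with hx
  have hcc' : c < c' := by simp [Fin.lt_def, hcc]
  have hxa : ∀ a, x a = w (s a) := fun a => rfl
  have hss : ∀ a, s (s a) = a := fun a => Equiv.swap_apply_self _ _ _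
  have hmem : (c, c') ∈ Finset.univ.filter
      (fun z : Fin m × Fin m => z.1 < z.2 ∧ w z.2 < w z.1) := by
    simp [hcc', hd]
  have hcard : pinv (w) = ((Finset.univ.filter
      (fun z : Fin m × Fin m => z.1 < z.2 ∧ w z.2 < w z.1)).erase (c, c')).card + 1 := by
    rw [Finset.card_erase_add_one hmem]; rfl
  rw [pinv, hcard]
  congr 1
  apply Finset.card_bij' (fun z _ => (s z.1, s z.2)) (fun z _ => (s z.1, s z.2))
  · rintro ⟨i, j⟩ hz
    simp only [Finset.mem_filter, Finset.mem_univ, true_and] at hz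
    obtain ⟨hij, hvij⟩ := hz
    have hne : ¬(i = c ∧ j = c') := by
      rintro ⟨hic, hjc⟩
      have h1 : x i = w c' := by rw [hxa, hic, hs, Equiv.swap_apply_left]
      have h2 : x j = w c := by rw [hxa, hjc, hs, Equiv.swap_apply_right]
      rw [h1, h2] at hvij
      exact absurd hvij (not_lt.2 hd.le)
    refine Finset.mem_erase.2 ⟨?_, ?_⟩
    · rintro hp
      have h1 : s i = c := congrArg Prod.fst hp
      have h2 : s j = c' := congrArg Prod.snd hp
      have hi : i = c' := by rw [← hss i, h1, hs, Equiv.swap_apply_left]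
      have hj : j = c := by rw [← hss j, h2, hs, Equiv.swap_apply_right]
      rw [hi, hj] at hij
      exact absurd hij (not_lt.2 hcc'.le)
    · simp only [Finset.mem_filter, Finset.mem_univ, true_and]
      refine ⟨adjswap_lt hcc hij hne, ?_⟩
      have h1 : w (s i) = x i := (hxa i).symm
      have h2 : w (s j) = x j := (hxa j).symm
      rw [h1, h2]; exact hvij
  · rintro ⟨i, j⟩ hz
    rw [Finset.mem_erase] at hz
    obtain ⟨hne0, hz⟩ := hz
    simp only [Finset.mem_filter, Finset.mem_univ, true_and] at hz
    obtain ⟨hij, hvij⟩ := hz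
    have hne : ¬(i = c ∧ j = c') := by
      rintro ⟨hic, hjc⟩; exact hne0 (by rw [hic, hjc])
    simp only [Finset.mem_filter, Finset.mem_univ, true_and]
    refine ⟨adjswap_lt hcc hij hne, ?_⟩
    have h1 : x (s i) = w i := by rw [hxa, hss]
    have h2 : x (s j) = w j := by rw [hxa, hss]
    rw [h1, h2]; exact hvij
  · rintro ⟨i, j⟩ _; simp [hss]
  · rintro ⟨i, j⟩ _; simp [hss]

lemma pinv_swap_adj_ascent {w : Equiv.Perm (Fin m)} {c c' : Fin m}
    (hcc : (c' : ℕ) = c + 1) (hd : w c < w c') :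
    pinv (w * Equiv.swap c c') = pinv w + 1 := by
  have h1 : (w * Equiv.swap c c') c' < (w * Equiv.swap c c') c := by
    simpa [Equiv.Perm.mul_apply] using hd
  have := pinv_swap_adj_descent hcc h1
  rw [mul_assoc, Equiv.swap_mul_self, mul_one] at this
  omega

lemma swap_triple {p r q : Fin m} (h1 : p ≠ r) (h2 : r ≠ q) (h3 : p ≠ q) :
    Equiv.swap r q * Equiv.swap p r * Equiv.swap r q = Equiv.swap p q := by
  have key := Equiv.swap_apply_apply (Equiv.swap r q) p r
  rw [Equiv.swap_apply_of_ne_of_ne h1 h3, Equiv.swap_apply_left] at key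
  rw [key, Equiv.swap_inv]

lemma descent_decomp {w : Equiv.Perm (Fin m)} {p q : Fin m} (hpq : p < q)
    (hq : (q : ℕ) ≠ (p : ℕ) + 1) :
    ∃ r : Fin m, p < r ∧ r < q ∧ (q : ℕ) = (r : ℕ) + 1 ∧
      Equiv.swap p q = Equiv.swap r q * Equiv.swap p r * Equiv.swap r q := by
  have hpq' : (p : ℕ) < q := hpq
  have hq1 : 1 ≤ (q : ℕ) := by omega
  refine ⟨⟨(q : ℕ) - 1, by omega⟩, ?_, ?_, by simp; omega, ?_⟩
  · exact Fin.lt_def.2 (by simp; omega)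
  · exact Fin.lt_def.2 (by simp; omega)
  · have h1 : p ≠ (⟨(q : ℕ) - 1, by omega⟩ : Fin m) := by
      intro hh; apply hq; have := congrArg Fin.val hh; simp at this; omega
    have h2 : (⟨(q : ℕ) - 1, by omega⟩ : Fin m) ≠ q := by
      intro hh
      have := congrArg Fin.val hh; simp at this; omega
    have h3 : p ≠ q := ne_of_lt hpq
    exact (swap_triple h1 h2 h3).symm

lemma pinv_descent_main :
    ∀ n (w : Equiv.Perm (Fin m)) (p q : Fin m), (q : ℕ) - (p : ℕ) ≤ n → p < q →
      w q < w p →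
      (pinv (w * Equiv.swap p q) < pinv w) ∧
      ((∀ r, p < r → r < q → ¬(w q < w r ∧ w r < w p)) →
        pinv (w * Equiv.swap p q) + 1 = pinv w) ∧
      ((∃ r, p < r ∧ r < q ∧ w q < w r ∧ w r < w p) →
        pinv (w * Equiv.swap p q) + 2 ≤ pinv w) := by
  intro n
  induction n with
  | zero => intro w p q hle hpq _; exact absurd hle (by have : (p:ℕ) < q := hpq; omega)
  | succ n IH =>
    intro w p q hle hpq hd
    by_cases hadj : (q : ℕ) = (p : ℕ) + 1
    · refine ⟨?_, fun _ => pinv_swap_adj_descent hadj hd, ?_⟩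
      · have := pinv_swap_adj_descent hadj hd; omega
      · rintro ⟨r, hr1, hr2, _, _⟩
        have h1 : (p : ℕ) < r := hr1
        have h2 : (r : ℕ) < q := hr2
        omega
    · obtain ⟨r, hpr, hrq, hq1, hdec⟩ := descent_decomp (w := w) hpq hadj
      set w1 := w * Equiv.swap r q with hw1
      set w2 := w1 * Equiv.swap p r with hw2
      have hpq' : (p : ℕ) < q := hpq
      have hpr' : (p : ℕ) < r := hpr
      have hrq' : (r : ℕ) < q := hrq
      have hrne : r ≠ q := ne_of_lt hrq
      have hpne : p ≠ r := ne_of_lt hpr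
      have hpqne : p ≠ q := ne_of_lt hpq
      -- values of w1
      have e1 : w1 r = w q := by
        rw [hw1, Equiv.Perm.mul_apply, Equiv.swap_apply_left]
      have e2 : w1 q = w r := by
        rw [hw1, Equiv.Perm.mul_apply, Equiv.swap_apply_right]
      have e3 : ∀ a, a ≠ r → a ≠ q → w1 a = w a := by
        intro a h1 h2
        rw [hw1, Equiv.Perm.mul_apply, Equiv.swap_apply_of_ne_of_ne h1 h2]
      have e1p : w1 p = w p := e3 p hpne hpqne
      -- values of w2
      have f1 : w2 r = w p := by
        rw [hw2, Equiv.Perm.mul_apply, Equiv.swap_apply_right, e1p]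
      have f2 : w2 q = w r := by
        rw [hw2, Equiv.Perm.mul_apply,
          Equiv.swap_apply_of_ne_of_ne (Ne.symm hpqne) (Ne.symm hrne), e2]
      -- step 2 facts : descent of w1 at (p, r)
      have hd2 : w1 r < w1 p := by rw [e1, e1p]; exact hd
      have IH2 := IH w1 p r (by omega) hpr hd2
      -- middle interval transfer
      have hmid : ∀ r', p < r' → r' < r → w1 r' = w r' := by
        intro r' h1 h2
        exact e3 r' (ne_of_lt h2) (ne_of_lt (h2.trans hrq))
      have heq : pinv (w * Equiv.swap p q) = pinv (w2 * Equiv.swap r q) := by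
        rw [hw2, hw1, hdec]; simp only [mul_assoc]
      -- case on e = w r
      have hewq : w r ≠ w q := fun hh => hrne (w.injective hh)
      have hewp : w r ≠ w p := fun hh => (ne_of_lt hpr) (w.injective hh.symm)
      obtain ⟨lt2, exact2, two2⟩ := IH2
      rw [show w1 * Equiv.swap p r = w2 from hw2.symm] at lt2 exact2 two2
      have hRtrans : (∀ r', p < r' → r' < q → ¬(w q < w r' ∧ w r' < w p)) →
          (∀ r', p < r' → r' < r → ¬(w1 r < w1 r' ∧ w1 r' < w1 p)) := by
        intro hR r' h1 h2
        rw [hmid r' h1 h2, e1, e1p]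
        exact hR r' h1 (h2.trans hrq)
      have hWtrans : (∃ rr, p < rr ∧ rr < q ∧ w q < w rr ∧ w rr < w p) → w r < w q ∨ w p < w r →
          (∃ rr, p < rr ∧ rr < r ∧ w1 r < w1 rr ∧ w1 rr < w1 p) := by
        rintro ⟨rr, k1, k2, k3, k4⟩ hside
        have hrrr : rr ≠ r := by
          rintro rfl
          rcases hside with h | h
          · exact absurd k3 (not_lt.2 h.le)
          · exact absurd k4 (not_lt.2 h.le)
        have : (rr : ℕ) < q := k2
        have hrrlt : rr < r := Fin.lt_def.2 (by
          have : (rr : ℕ) ≠ (r : ℕ) := fun hh => hrrr (Fin.ext hh)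
          omega)
        refine ⟨rr, k1, hrrlt, ?_, ?_⟩
        · rw [hmid rr k1 hrrlt, e1]; exact k3
        · rw [hmid rr k1 hrrlt, e1p]; exact k4
      rcases lt_or_gt_of_ne hewq with he | he
      · -- w r < w q : step1 ascent, step3 descent
        have s1 : pinv w1 = pinv w + 1 := pinv_swap_adj_ascent hq1 he
        have hd3 : w2 q < w2 r := by rw [f1, f2]; exact he.trans hd
        have s3 : pinv (w2 * Equiv.swap r q) + 1 = pinv w2 := pinv_swap_adj_descent hq1 hd3
        refine ⟨by omega, fun hR => ?_, fun hW => ?_⟩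
        · have := exact2 (hRtrans hR); omega
        · have := two2 (hWtrans hW (Or.inl he)); omega
      · rcases lt_or_gt_of_ne hewp with he2 | he2
        · -- w q < w r < w p
          have s1 : pinv w1 + 1 = pinv w := pinv_swap_adj_descent hq1 he
          have hd3 : w2 q < w2 r := by rw [f1, f2]; exact he2
          have s3 : pinv (w2 * Equiv.swap r q) + 1 = pinv w2 := pinv_swap_adj_descent hq1 hd3
          refine ⟨by omega, fun hR => absurd ⟨he, he2⟩ (hR r hpr hrq), fun _ => by omega⟩
        · -- w r > w p : step1 descent, step3 ascent
          have s1 : pinv w1 + 1 = pinv w := pinv_swap_adj_descent hq1 he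
          have hd3 : w2 r < w2 q := by rw [f1, f2]; exact he2
          have s3 : pinv (w2 * Equiv.swap r q) = pinv w2 + 1 := pinv_swap_adj_ascent hq1 hd3
          refine ⟨by omega, fun hR => ?_, fun hW => ?_⟩
          · have := exact2 (hRtrans hR); omega
          · have := two2 (hWtrans hW (Or.inr he2)); omega

lemma descent_exists {w : Equiv.Perm (Fin m)} (hw : w ≠ 1) :
    ∃ c c' : Fin m, (c' : ℕ) = (c : ℕ) + 1 ∧ w c' < w c := by
  by_contra hcon
  push_neg at hcon
  have hmono : StrictMono w := by
    rcases m with _ | m'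
    · intro a; exact absurd a.isLt (by omega)
    · rw [Fin.strictMono_iff_lt_succ]
      intro i
      have hval : ((Fin.succ i : Fin (m' + 1)) : ℕ) = ((Fin.castSucc i : Fin (m' + 1)) : ℕ) + 1 := by
        simp
      have h1 := hcon (Fin.castSucc i) (Fin.succ i) hval
      have hne : w (Fin.castSucc i) ≠ w (Fin.succ i) := by
        intro hh
        have := w.injective hh
        have := congrArg Fin.val this
        simp at this
      exact lt_of_le_of_ne h1 hne
  have hmono' : StrictMono (w⁻¹ : Equiv.Perm (Fin m)) := by
    intro a b hab
    rcases lt_trichotomy ((w⁻¹ : Equiv.Perm (Fin m)) a) (w⁻¹ b) with h | h | h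
    · exact h
    · have := congrArg w h
      simp only [show ∀ x, w (w⁻¹ x) = x from fun x => w.apply_symm_apply x] at this
      exact absurd this (ne_of_lt hab)
    · have := hmono h
      simp only [show ∀ x, w (w⁻¹ x) = x from fun x => w.apply_symm_apply x] at this
      exact absurd hab (not_lt.2 this.le)
  have hge : ∀ (f : Equiv.Perm (Fin m)), StrictMono f → ∀ i : Fin m, (i : ℕ) ≤ (f i : ℕ) := by
    intro f hf
    have key : ∀ k, ∀ i : Fin m, (i : ℕ) = k → k ≤ (f i : ℕ) := by
      intro k
      induction k using Nat.strong_induction_on with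
      | _ k IH =>
        intro i hik
        rcases Nat.eq_zero_or_pos k with h0 | h0
        · omega
        · have hkm : k - 1 < m := by have := i.isLt; omega
          have hlt : (⟨k - 1, hkm⟩ : Fin m) < i := by
            rw [Fin.lt_def]; simp; omega
          have h1 := IH (k - 1) (by omega) ⟨k - 1, hkm⟩ rfl
          have h2 := hf hlt
          rw [Fin.lt_def] at h2
          omega
    exact fun i => key (i : ℕ) i rfl
  apply hw
  ext i
  have h1 := hge w hmono i
  have h2 := hge _ hmono' (w i)
  simp only [show ∀ x, w⁻¹ (w x) = x from fun x => w.symm_apply_apply x] at h2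
  simp only [Equiv.Perm.one_apply]
  exact le_antisymm h2 h1

lemma pinv_one : pinv (1 : Equiv.Perm (Fin m)) = 0 := by
  rw [pinv]
  convert Finset.card_empty
  rw [Finset.filter_eq_empty_iff]
  rintro ⟨i, j⟩ _
  simp only [Equiv.Perm.one_apply]
  rintro ⟨h1, h2⟩
  exact absurd h1 (not_lt.2 h2.le)

lemma pinv_eq_zero {w : Equiv.Perm (Fin m)} (h : pinv w = 0) : w = 1 := by
  by_contra hw
  obtain ⟨c, c', hcc, hd⟩ := descent_exists hw
  have hcc' : c < c' := by rw [Fin.lt_def]; omega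
  have : (c, c') ∈ Finset.univ.filter
      (fun z : Fin m × Fin m => z.1 < z.2 ∧ w z.2 < w z.1) := by
    simp [hcc', hd]
  rw [pinv] at h
  rw [Finset.card_eq_zero] at h
  rw [h] at this
  exact absurd this (Finset.notMem_empty _)

lemma pinv_mul_adj_le {w x : Equiv.Perm (Fin m)} (hx : IsAdjSwap x) :
    pinv (w * x) ≤ pinv w + 1 := by
  obtain ⟨c, c', hcc, rfl⟩ := hx
  have hne : w c ≠ w c' := fun hh => by
    have := congrArg Fin.val (w.injective hh); omega
  rcases lt_or_gt_of_ne hne with h | h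
  · exact le_of_eq (pinv_swap_adj_ascent hcc h)
  · have := pinv_swap_adj_descent hcc h; omega

lemma pinv_prod_le (l : List (Equiv.Perm (Fin m))) (hl : ∀ x ∈ l, IsAdjSwap x) :
    pinv l.prod ≤ l.length := by
  induction l using List.reverseRecOn with
  | nil => simp [pinv_one]
  | append_singleton l s IH =>
    rw [List.prod_append, List.prod_singleton, List.length_append]
    have h1 := pinv_mul_adj_le (w := l.prod) (hl s (by simp))
    have h2 := IH (fun x hx => hl x (by simp [hx]))
    simp only [List.length_singleton]
    omega

lemma exists_word_pinv (w : Equiv.Perm (Fin m)) :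
    ∃ l : List (Equiv.Perm (Fin m)), (∀ x ∈ l, IsAdjSwap x) ∧ l.prod = w ∧
      l.length = pinv w := by
  suffices h : ∀ n (w : Equiv.Perm (Fin m)), pinv w ≤ n →
      ∃ l : List (Equiv.Perm (Fin m)), (∀ x ∈ l, IsAdjSwap x) ∧ l.prod = w ∧
        l.length = pinv w by
    exact h (pinv w) w le_rfl
  intro n
  induction n with
  | zero =>
    intro w hw
    have := pinv_eq_zero (Nat.le_zero.1 hw)
    subst this
    exact ⟨[], by simp, by simp, by simp [pinv_one]⟩
  | succ n IH =>
    intro w hw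
    by_cases h1 : w = 1
    · subst h1; exact ⟨[], by simp, by simp, by simp [pinv_one]⟩
    · obtain ⟨c, c', hcc, hd⟩ := descent_exists h1
      have hstep := pinv_swap_adj_descent hcc hd
      obtain ⟨l', hadj', hprod', hlen'⟩ := IH (w * Equiv.swap c c') (by omega)
      refine ⟨l' ++ [Equiv.swap c c'], ?_, ?_, ?_⟩
      · intro x hx
        rcases List.mem_append.1 hx with h | h
        · exact hadj' x h
        · rw [List.mem_singleton] at h
          exact h ▸ ⟨c, c', hcc, rfl⟩
      · rw [List.prod_append, List.prod_singleton, hprod', mul_assoc,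
          Equiv.swap_mul_self, mul_one]
      · rw [List.length_append, hlen']
        simp only [List.length_singleton]
        omega

lemma len_eq_pinv (w : Equiv.Perm (Fin m)) : len w = pinv w := by
  apply le_antisymm
  · obtain ⟨l, h1, h2, h3⟩ := exists_word_pinv w
    exact Nat.sInf_le ⟨l, h1, h2, h3⟩
  · apply le_csInf
    · obtain ⟨l, h1, h2, h3⟩ := exists_word_pinv w
      exact ⟨pinv w, l, h1, h2, h3⟩
    · rintro n ⟨l, h1, h2, h3⟩
      rw [← h3, ← h2]
      exact pinv_prod_le l h1

lemma isReducedWord_iff {l : List (Equiv.Perm (Fin m))} {w : Equiv.Perm (Fin m)} :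
    IsReducedWord l w ↔ (∀ x ∈ l, IsAdjSwap x) ∧ l.prod = w ∧ l.length = pinv w := by
  rw [IsReducedWord, len_eq_pinv]

-- corollaries of the main descent lemma
lemma pinv_swap_descent_lt {w : Equiv.Perm (Fin m)} {p q : Fin m} (hpq : p < q)
    (hd : w q < w p) : pinv (w * Equiv.swap p q) < pinv w :=
  (pinv_descent_main ((q : ℕ) - (p : ℕ)) w p q le_rfl hpq hd).1

lemma pinv_swap_ascent_exact {w : Equiv.Perm (Fin m)} {p q : Fin m} (hpq : p < q)
    (ha : w p < w q) (hR : ∀ r, p < r → r < q → ¬(w p < w r ∧ w r < w q)) :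
    pinv (w * Equiv.swap p q) = pinv w + 1 := by
  set w' := w * Equiv.swap p q with hw'
  have hp : w' p = w q := by rw [hw', Equiv.Perm.mul_apply, Equiv.swap_apply_left]
  have hq : w' q = w p := by rw [hw', Equiv.Perm.mul_apply, Equiv.swap_apply_right]
  have hd : w' q < w' p := by rw [hp, hq]; exact ha
  have hR' : ∀ r, p < r → r < q → ¬(w' q < w' r ∧ w' r < w' p) := by
    intro r h1 h2
    have : w' r = w r := by
      rw [hw', Equiv.Perm.mul_apply,
        Equiv.swap_apply_of_ne_of_ne (ne_of_gt h1) (ne_of_lt h2)]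
    rw [this, hp, hq]
    exact hR r h1 h2
  have := (pinv_descent_main ((q : ℕ) - (p : ℕ)) w' p q le_rfl hpq hd).2.1 hR'
  have hww : w' * Equiv.swap p q = w := by
    rw [hw', mul_assoc, Equiv.swap_mul_self, mul_one]
  rw [hww] at this
  omega

lemma pinv_swap_ascent_two {w : Equiv.Perm (Fin m)} {p q : Fin m} (hpq : p < q)
    (ha : w p < w q) (hW : ∃ r, p < r ∧ r < q ∧ w p < w r ∧ w r < w q) :
    pinv w + 2 ≤ pinv (w * Equiv.swap p q) := by
  set w' := w * Equiv.swap p q with hw'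
  have hp : w' p = w q := by rw [hw', Equiv.Perm.mul_apply, Equiv.swap_apply_left]
  have hq : w' q = w p := by rw [hw', Equiv.Perm.mul_apply, Equiv.swap_apply_right]
  have hd : w' q < w' p := by rw [hp, hq]; exact ha
  have hW' : ∃ r, p < r ∧ r < q ∧ w' q < w' r ∧ w' r < w' p := by
    obtain ⟨r, h1, h2, h3, h4⟩ := hW
    have : w' r = w r := by
      rw [hw', Equiv.Perm.mul_apply,
        Equiv.swap_apply_of_ne_of_ne (ne_of_gt h1) (ne_of_lt h2)]
    exact ⟨r, h1, h2, by rw [this, hq]; exact h3, by rw [this, hp]; exact h4⟩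
  have := (pinv_descent_main ((q : ℕ) - (p : ℕ)) w' p q le_rfl hpq hd).2.2 hW'
  have hww : w' * Equiv.swap p q = w := by
    rw [hw', mul_assoc, Equiv.swap_mul_self, mul_one]
  rw [hww] at this
  exact this


lemma adj_flip {c c' a b : Fin m} (hcc : (c' : ℕ) = (c : ℕ) + 1) (hab : a < b)
    (hflip : Equiv.swap c c' b < Equiv.swap c c' a) : a = c ∧ b = c' := by
  by_contra h
  exact absurd hflip (not_lt.2 (adjswap_lt hcc hab h).le)

lemma exchange (l : List (Equiv.Perm (Fin m))) (hl : ∀ x ∈ l, IsAdjSwap x)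
    (p q : Fin m) (hpq : p < q) (hd : l.prod q < l.prod p) :
    ∃ l₁ x l₂, l = l₁ ++ x :: l₂ ∧
      (l₁ ++ l₂).prod = l.prod * Equiv.swap p q := by
  induction l with
  | nil =>
    simp only [List.prod_nil, Equiv.Perm.one_apply] at hd
    exact absurd hd (not_lt.2 hpq.le)
  | cons s t IH =>
    obtain ⟨c, c', hcc, hs⟩ := hl s List.mem_cons_self
    have hprod : (s :: t).prod = s * t.prod := List.prod_cons
    set v := t.prod with hv
    have hne : v p ≠ v q := fun hh => (ne_of_lt hpq) (v.injective hh)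
    have hd' : s (v q) < s (v p) := by
      rw [hprod] at hd; exact hd
    rcases lt_or_gt_of_ne hne with hvv | hvv
    · -- v p < v q, the head letter must swap them
      rw [hs] at hd'
      obtain ⟨h1, h2⟩ := adj_flip hcc hvv hd'
      refine ⟨[], s, t, by simp, ?_⟩
      rw [List.nil_append, hprod]
      ext z
      rw [Equiv.Perm.mul_apply, Equiv.Perm.mul_apply]
      by_cases hzp : z = p
      · subst hzp
        rw [Equiv.swap_apply_left, h2, hs, Equiv.swap_apply_right, ← h1]
      · by_cases hzq : z = q
        · subst hzq
          rw [Equiv.swap_apply_right, h1, hs, Equiv.swap_apply_left, ← h2]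
        · rw [Equiv.swap_apply_of_ne_of_ne hzp hzq, hs,
            Equiv.swap_apply_of_ne_of_ne
              (fun hh => hzp (v.injective (h1 ▸ hh)))
              (fun hh => hzq (v.injective (h2 ▸ hh)))]
    · -- v q < v p : recurse
      obtain ⟨t₁, x, t₂, ht, hpt⟩ := IH (fun y hy => hl y (List.mem_cons_of_mem s hy)) hvv
      refine ⟨s :: t₁, x, t₂, by rw [ht]; rfl, ?_⟩
      rw [List.cons_append, List.prod_cons, hpt, hprod, mul_assoc]

/-- one step up in Bruhat order: multiply by a transposition with no value in between -/
def Rel1 (u w : Equiv.Perm (Fin m)) : Prop :=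
  ∃ p q : Fin m, p < q ∧ u p < u q ∧
    (∀ r, p < r → r < q → ¬(u p < u r ∧ u r < u q)) ∧ w = u * Equiv.swap p q

lemma Rel1.pinv_eq {u w : Equiv.Perm (Fin m)} (h : Rel1 u w) : pinv w = pinv u + 1 := by
  obtain ⟨p, q, h1, h2, h3, rfl⟩ := h
  exact pinv_swap_ascent_exact h1 h2 h3

lemma chain_subword {u w : Equiv.Perm (Fin m)}
    (h : Relation.ReflTransGen Rel1 u w) :
    ∀ lw : List (Equiv.Perm (Fin m)), (∀ x ∈ lw, IsAdjSwap x) → lw.prod = w →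
      lw.length = pinv w →
      ∃ lu : List (Equiv.Perm (Fin m)), lu.Sublist lw ∧ (∀ x ∈ lu, IsAdjSwap x) ∧
        lu.prod = u ∧ lu.length = pinv u := by
  induction h with
  | refl => exact fun lw h1 h2 h3 => ⟨lw, List.Sublist.refl lw, h1, h2, h3⟩
  | tail hab hbc IH =>
    rename_i b c
    intro lw h1 h2 h3
    obtain ⟨p, q, k1, k2, k3, rfl⟩ := hbc
    have hcp : (b * Equiv.swap p q) p = b q := by
      rw [Equiv.Perm.mul_apply, Equiv.swap_apply_left]
    have hcq : (b * Equiv.swap p q) q = b p := by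
      rw [Equiv.Perm.mul_apply, Equiv.swap_apply_right]
    have hdesc : (b * Equiv.swap p q) q < (b * Equiv.swap p q) p := by
      rw [hcp, hcq]; exact k2
    rw [← h2] at hdesc
    obtain ⟨l₁, x, l₂, hsplit, hprodeq⟩ := exchange lw h1 p q k1 hdesc
    have hbprod : (l₁ ++ l₂).prod = b := by
      rw [hprodeq, h2, mul_assoc, Equiv.swap_mul_self, mul_one]
    have hsub : (l₁ ++ l₂).Sublist lw := by
      rw [hsplit]
      exact (List.sublist_cons_self x l₂).append_left l₁
    have hlenb : (l₁ ++ l₂).length = pinv b := by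
      have hc : pinv (b * Equiv.swap p q) = pinv b + 1 :=
        Rel1.pinv_eq ⟨p, q, k1, k2, k3, rfl⟩
      have : lw.length = l₁.length + 1 + l₂.length := by
        rw [hsplit]; simp; omega
      rw [List.length_append]
      omega
    obtain ⟨lu, s1, s2, s3, s4⟩ := IH (l₁ ++ l₂)
      (fun y hy => h1 y (hsub.mem hy)) hbprod hlenb
    exact ⟨lu, s1.trans hsub, s2, s3, s4⟩

/-- the dominance matrix -/
def Dm (x : Equiv.Perm (Fin m)) (i k : ℕ) : ℕ :=
  ∑ j : Fin m, if (j : ℕ) < i ∧ k ≤ (x j : ℕ) then 1 else 0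

lemma Dm_succ (x : Equiv.Perm (Fin m)) (j : Fin m) (k : ℕ) :
    Dm x ((j : ℕ) + 1) k = Dm x (j : ℕ) k + (if k ≤ (x j : ℕ) then 1 else 0) := by
  rw [Dm, Dm, ← Finset.add_sum_erase _ _ (Finset.mem_univ j),
    ← Finset.add_sum_erase _ _ (Finset.mem_univ j)]
  have hcong : ∀ jj ∈ Finset.univ.erase j,
      (if (jj : ℕ) < (j : ℕ) + 1 ∧ k ≤ (x jj : ℕ) then 1 else 0) =
      (if (jj : ℕ) < (j : ℕ) ∧ k ≤ (x jj : ℕ) then 1 else 0) := by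
    intro jj hjj
    have hne : (jj : ℕ) ≠ (j : ℕ) :=
      fun hh => (Finset.mem_erase.1 hjj).1 (Fin.ext hh)
    split_ifs <;> omega
  rw [Finset.sum_congr rfl hcong]
  split_ifs <;> omega

lemma Dm_swap (x : Equiv.Perm (Fin m)) {p q : Fin m} (hpq : p < q) (i k : ℕ) :
    Dm (x * Equiv.swap p q) i k +
      (if (p : ℕ) < i ∧ i ≤ (q : ℕ) ∧ k ≤ (x p : ℕ) then 1 else 0) =
    Dm x i k + (if (p : ℕ) < i ∧ i ≤ (q : ℕ) ∧ k ≤ (x q : ℕ) then 1 else 0) := by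
  have hpq' : (p : ℕ) < (q : ℕ) := hpq
  have hne : p ≠ q := ne_of_lt hpq
  have hvp : (x * Equiv.swap p q) p = x q := by
    rw [Equiv.Perm.mul_apply, Equiv.swap_apply_left]
  have hvq : (x * Equiv.swap p q) q = x p := by
    rw [Equiv.Perm.mul_apply, Equiv.swap_apply_right]
  rw [Dm, Dm, ← Finset.add_sum_erase _ _ (Finset.mem_univ p),
    ← Finset.add_sum_erase _ _ (Finset.mem_univ p),
    ← Finset.add_sum_erase _ _ (Finset.mem_erase.2 ⟨Ne.symm hne, Finset.mem_univ q⟩),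
    ← Finset.add_sum_erase _ _ (Finset.mem_erase.2 ⟨Ne.symm hne, Finset.mem_univ q⟩)]
  have hcong : ∀ jj ∈ (Finset.univ.erase p).erase q,
      (if (jj : ℕ) < i ∧ k ≤ ((x * Equiv.swap p q) jj : ℕ) then 1 else 0) =
      (if (jj : ℕ) < i ∧ k ≤ (x jj : ℕ) then 1 else 0) := by
    intro jj hjj
    rw [Finset.mem_erase, Finset.mem_erase] at hjj
    rw [Equiv.Perm.mul_apply, Equiv.swap_apply_of_ne_of_ne hjj.2.1 hjj.1]
  rw [Finset.sum_congr rfl hcong, hvp, hvq]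
  have hqi : (q : ℕ) < i → (p : ℕ) < i := by omega
  split_ifs <;> omega

lemma Dm_swap_ascent_le (x : Equiv.Perm (Fin m)) {p q : Fin m} (hpq : p < q)
    (ha : x p < x q) (i k : ℕ) : Dm x i k ≤ Dm (x * Equiv.swap p q) i k := by
  have key := Dm_swap x hpq i k
  have hv : (x p : ℕ) < (x q : ℕ) := ha
  split_ifs at key <;> omega

lemma dom_lift {u w : Equiv.Perm (Fin m)} {c c' : Fin m} (hcc : (c' : ℕ) = (c : ℕ) + 1)
    (hu : u c < u c') (hw : w c < w c') (hdom : ∀ i k, Dm u i k ≤ Dm w i k) :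
    ∀ i k, Dm (u * Equiv.swap c c') i k ≤ Dm (w * Equiv.swap c c') i k := by
  intro i k
  have hcc' : c < c' := Fin.lt_def.2 (by omega)
  have keyu := Dm_swap u hcc' i k
  have keyw := Dm_swap w hcc' i k
  by_cases hi : (c : ℕ) < i ∧ i ≤ (c' : ℕ)
  · -- i = c + 1
    have hieq : i = (c : ℕ) + 1 := by omega
    have hu' : (u c : ℕ) < (u c' : ℕ) := hu
    have hw' : (w c : ℕ) < (w c' : ℕ) := hw
    have h1 := hdom i k
    by_cases htr : (u c : ℕ) < k ∧ k ≤ (u c' : ℕ)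
    · -- trouble zone
      by_cases hwz : (w c : ℕ) < k ∧ k ≤ (w c' : ℕ)
      · split_ifs at keyu keyw <;> omega
      · -- w brackets equal; need strict A < B
        have hstrict : Dm u i k < Dm w i k := by
          rcases not_and_or.1 hwz with hlo | hhi
          · -- k ≤ w c : use row c
            have hlo' : k ≤ (w c : ℕ) := by omega
            have hsu := Dm_succ u c k
            have hsw := Dm_succ w c k
            have h0 := hdom (c : ℕ) k
            rw [← hieq] at hsu hsw
            split_ifs at hsu hsw <;> omega
          · -- k > w c' : use row c + 2
            have hhi' : (w c' : ℕ) < k := by omega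
            have hieq2 : (c' : ℕ) = i := by omega
            have hsu := Dm_succ u c' k
            have hsw := Dm_succ w c' k
            have h0 := hdom ((c' : ℕ) + 1) k
            rw [hieq2] at hsu hsw h0
            split_ifs at hsu hsw <;> omega
        split_ifs at keyu keyw <;> omega
    · split_ifs at keyu keyw <;> omega
  · have h1 := hdom i k
    split_ifs at keyu keyw <;> omega

lemma red_concat {L : List (Equiv.Perm (Fin m))} {c c' : Fin m}
    (hadj : ∀ x ∈ L ++ [Equiv.swap c c'], IsAdjSwap x)
    (hcc : (c' : ℕ) = (c : ℕ) + 1)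
    (hred : (L ++ [Equiv.swap c c']).length = pinv ((L ++ [Equiv.swap c c']).prod)) :
    L.length = pinv L.prod ∧ L.prod c < L.prod c' := by
  have hadjL : ∀ x ∈ L, IsAdjSwap x := fun x hx => hadj x (by simp [hx])
  have hprod : (L ++ [Equiv.swap c c']).prod = L.prod * Equiv.swap c c' := by
    rw [List.prod_append, List.prod_singleton]
  have h1 : pinv (L.prod * Equiv.swap c c') ≤ pinv L.prod + 1 :=
    pinv_mul_adj_le ⟨c, c', hcc, rfl⟩
  have h2 : pinv L.prod ≤ L.length := pinv_prod_le L hadjL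
  have h3 : (L ++ [Equiv.swap c c']).length = L.length + 1 := by simp
  have hlenL : L.length = pinv L.prod := by
    rw [hprod] at hred; omega
  refine ⟨hlenL, ?_⟩
  have hne : L.prod c ≠ L.prod c' := fun hh => by
    have := congrArg Fin.val (L.prod.injective hh); omega
  rcases lt_or_gt_of_ne hne with h | h
  · exact h
  · exfalso
    have := pinv_swap_adj_descent hcc h
    rw [hprod] at hred
    omega

lemma dom_of_sublist :
    ∀ lw lu : List (Equiv.Perm (Fin m)), (∀ x ∈ lw, IsAdjSwap x) → lu.Sublist lw →
      lw.length = pinv lw.prod → lu.length = pinv lu.prod →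
      ∀ i k, Dm lu.prod i k ≤ Dm lw.prod i k := by
  intro lw
  induction lw using List.reverseRecOn with
  | nil =>
    intro lu _ hsub _ _ i k
    rw [List.sublist_nil.1 hsub]
  | append_singleton L s IH =>
    intro lu hadj hsub hredw hredu i k
    obtain ⟨c, c', hcc, rfl⟩ := hadj s (by simp)
    obtain ⟨hlenL, hasc⟩ := red_concat hadj hcc hredw
    have hadjL : ∀ x ∈ L, IsAdjSwap x := fun x hx => hadj x (by simp [hx])
    have hcc' : c < c' := Fin.lt_def.2 (by omega)
    have hprod : (L ++ [Equiv.swap c c']).prod = L.prod * Equiv.swap c c' := by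
      rw [List.prod_append, List.prod_singleton]
    rw [List.sublist_append_iff] at hsub
    obtain ⟨l₁, l₂, rfl, hsub1, hsub2⟩ := hsub
    rcases List.sublist_singleton.1 hsub2 with rfl | rfl
    · -- lu <+ L
      rw [List.append_nil] at hredu ⊢
      have h1 := IH l₁ hadjL hsub1 hlenL hredu i k
      have h2 := Dm_swap_ascent_le L.prod hcc' hasc i k
      rw [hprod]
      omega
    · -- lu = l₁ ++ [swap c c']
      have hadju : ∀ x ∈ l₁ ++ [Equiv.swap c c'], IsAdjSwap x := by
        intro x hx
        rcases List.mem_append.1 hx with h | h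
        · exact hadjL x (hsub1.mem h)
        · exact hadj x (by simp at h; simp [h])
      obtain ⟨hlenl₁, hascu⟩ := red_concat hadju hcc hredu
      have hdom := IH l₁ hadjL hsub1 hlenL hlenl₁
      have hprodu : (l₁ ++ [Equiv.swap c c']).prod = l₁.prod * Equiv.swap c c' := by
        rw [List.prod_append, List.prod_singleton]
      rw [hprod, hprodu]
      exact dom_lift hcc hascu hasc hdom i k

lemma Dm_prefix_eq {u w : Equiv.Perm (Fin m)} {p : Fin m}
    (h : ∀ j : Fin m, j < p → u j = w j) (k : ℕ) :
    Dm u (p : ℕ) k = Dm w (p : ℕ) k := by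
  apply Finset.sum_congr rfl
  intro j _
  by_cases hj : (j : ℕ) < (p : ℕ)
  · rw [h j (Fin.lt_def.2 hj)]
  · simp [hj]

lemma Dm_cross {x : Equiv.Perm (Fin m)} {a i k K : ℕ} (ha : a ≤ i) (hi : i ≤ m)
    (hcond : ∀ j : Fin m, a ≤ (j : ℕ) → (j : ℕ) < i →
      ((k ≤ (x j : ℕ)) ↔ (K ≤ (x j : ℕ)))) :
    Dm x i k + Dm x a K = Dm x i K + Dm x a k := by
  have key : ∀ t, a ≤ t → t ≤ i → Dm x t k + Dm x a K = Dm x t K + Dm x a k := by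
    intro t
    induction t with
    | zero => intro h1 _; have : a = 0 := by omega
              subst this; ring
    | succ t IH =>
      intro h1 h2
      rcases Nat.lt_or_ge t a with h3 | h3
      · have : a = t + 1 := by omega
        subst this; ring
      · have ht : t < m := by omega
        have e1 := Dm_succ x ⟨t, ht⟩ k
        have e2 := Dm_succ x ⟨t, ht⟩ K
        simp only [Fin.val_mk] at e1 e2
        have e3 := hcond ⟨t, ht⟩ (by simpa using h3) (by simpa using h2)
        have e4 := IH h3 (by omega)
        split_ifs at e1 e2 <;> simp_all <;> omega
  exact key i ha le_rfl

lemma Dm_cross_le {x : Equiv.Perm (Fin m)} {a i k K : ℕ} (ha : a ≤ i) (hi : i ≤ m)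
    (hcond : ∀ j : Fin m, a ≤ (j : ℕ) → (j : ℕ) < i →
      (K ≤ (x j : ℕ) → k ≤ (x j : ℕ))) :
    Dm x i K + Dm x a k ≤ Dm x i k + Dm x a K := by
  have key : ∀ t, a ≤ t → t ≤ i → Dm x t K + Dm x a k ≤ Dm x t k + Dm x a K := by
    intro t
    induction t with
    | zero => intro h1 _; have : a = 0 := by omega
              subst this; omega
    | succ t IH =>
      intro h1 h2
      rcases Nat.lt_or_ge t a with h3 | h3
      · have : a = t + 1 := by omega
        subst this; omega
      · have ht : t < m := by omega
        have e1 := Dm_succ x ⟨t, ht⟩ k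
        have e2 := Dm_succ x ⟨t, ht⟩ K
        simp only [Fin.val_mk] at e1 e2
        have e3 := hcond ⟨t, ht⟩ (by simpa using h3) (by simpa using h2)
        have e4 := IH h3 (by omega)
        split_ifs at e1 e2 <;> simp_all <;> omega
  exact key i ha le_rfl

lemma dom_step {u w : Equiv.Perm (Fin m)} (hdom : ∀ i k, Dm u i k ≤ Dm w i k)
    (hne : u ≠ w) :
    ∃ u', Rel1 u u' ∧ (∀ i k, Dm u' i k ≤ Dm w i k) ∧
      (∀ i k, Dm u i k ≤ Dm u' i k) ∧
      ∃ i₀ k₀, i₀ ≤ m ∧ k₀ ≤ m ∧ Dm u i₀ k₀ < Dm u' i₀ k₀ := by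
  classical
  -- first difference position p
  have hPne : (Finset.univ.filter (fun j : Fin m => u j ≠ w j)).Nonempty := by
    by_contra hcon
    apply hne
    ext z
    have := Finset.not_nonempty_iff_eq_empty.1 hcon
    by_contra hz
    have : z ∈ Finset.univ.filter (fun j : Fin m => u j ≠ w j) := by
      simp only [Finset.mem_filter, Finset.mem_univ, true_and]
      exact fun hh => hz (by rw [hh])
    simp_all
  set p := (Finset.univ.filter (fun j : Fin m => u j ≠ w j)).min' hPne with hp
  have hpP : u p ≠ w p := by
    have := Finset.min'_mem _ hPne
    rw [← hp] at this
    exact (Finset.mem_filter.1 this).2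
  have hppre : ∀ j : Fin m, j < p → u j = w j := by
    intro j hj
    by_contra hcon
    have : j ∈ Finset.univ.filter (fun j : Fin m => u j ≠ w j) := by
      simp only [Finset.mem_filter, Finset.mem_univ, true_and]; exact hcon
    have := Finset.min'_le _ _ this
    rw [← hp] at this
    exact absurd hj (not_lt.2 this)
  -- u p < w p
  have hupwp : (u p : ℕ) < (w p : ℕ) := by
    have h1 := Dm_succ u p ((u p : ℕ))
    have h2 := Dm_succ w p ((u p : ℕ))
    have h3 := Dm_prefix_eq hppre ((u p : ℕ))
    have h4 := hdom ((p : ℕ) + 1) ((u p : ℕ))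
    have hne' : (u p : ℕ) ≠ (w p : ℕ) := fun hh => hpP (Fin.ext hh)
    split_ifs at h1 h2 <;> omega
  -- the set Q and its minimum q
  have hQne : (Finset.univ.filter (fun j : Fin m =>
      p < j ∧ u p < u j ∧ (u j : ℕ) ≤ (w p : ℕ))).Nonempty := by
    refine ⟨u⁻¹ (w p), ?_⟩
    simp only [Finset.mem_filter, Finset.mem_univ, true_and]
    have huj : u (u⁻¹ (w p)) = w p := u.apply_symm_apply (w p)
    have hne1 : u⁻¹ (w p) ≠ p := by
      intro hh; rw [hh] at huj; exact hpP huj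
    have hgt : p < u⁻¹ (w p) := by
      rcases lt_trichotomy (u⁻¹ (w p)) p with h | h | h
      · exfalso
        have := hppre _ h
        rw [huj] at this
        have := w.injective this.symm
        exact hne1 this
      · exact absurd h hne1
      · exact h
    refine ⟨hgt, ?_, ?_⟩
    · rw [huj]; exact Fin.lt_def.2 hupwp
    · rw [huj]
  set q := (Finset.univ.filter (fun j : Fin m =>
      p < j ∧ u p < u j ∧ (u j : ℕ) ≤ (w p : ℕ))).min' hQne with hq
  have hqQ : p < q ∧ u p < u q ∧ (u q : ℕ) ≤ (w p : ℕ) := by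
    have := Finset.min'_mem _ hQne
    rw [← hq] at this
    exact (Finset.mem_filter.1 this).2
  obtain ⟨hpq, hasc, huqwp⟩ := hqQ
  have hR : ∀ r, p < r → r < q → ¬(u p < u r ∧ u r < u q) := by
    rintro r h1 h2 ⟨h3, h4⟩
    have hr : r ∈ Finset.univ.filter (fun j : Fin m =>
        p < j ∧ u p < u j ∧ (u j : ℕ) ≤ (w p : ℕ)) := by
      simp only [Finset.mem_filter, Finset.mem_univ, true_and]
      exact ⟨h1, h3, le_trans (le_of_lt h4) huqwp⟩
    have := Finset.min'_le _ _ hr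
    rw [← hq] at this
    exact absurd h2 (not_lt.2 this)
  refine ⟨u * Equiv.swap p q, ⟨p, q, hpq, hasc, hR, rfl⟩, ?_, ?_, ?_⟩
  · -- dominance of u' by w
    intro i k
    have key := Dm_swap u hpq i k
    by_cases htr : (p : ℕ) < i ∧ i ≤ (q : ℕ) ∧ (u p : ℕ) < k ∧ k ≤ (u q : ℕ)
    · -- trouble zone : show Dm u i k < Dm w i k
      obtain ⟨ht1, ht2, ht3, ht4⟩ := htr
      set K := (w p : ℕ) + 1 with hK
      have him : i ≤ m := by have := q.isLt; omega
      -- u-side cross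
      have hcu : Dm u i k + Dm u ((p : ℕ) + 1) K = Dm u i K + Dm u ((p : ℕ) + 1) k := by
        apply Dm_cross (by omega) him
        intro j hj1 hj2
        have hjq : j ≠ q := by
          intro hh; rw [hh] at hj2; omega
        have hjp : p < j := by rw [Fin.lt_def]; omega
        have hnotQ : ¬(p < j ∧ u p < u j ∧ (u j : ℕ) ≤ (w p : ℕ)) := by
          intro hh
          have hr : j ∈ Finset.univ.filter (fun j : Fin m =>
              p < j ∧ u p < u j ∧ (u j : ℕ) ≤ (w p : ℕ)) := by
            simp only [Finset.mem_filter, Finset.mem_univ, true_and]; exact hh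
          have := Finset.min'_le _ _ hr
          rw [← hq] at this
          have : (q : ℕ) ≤ (j : ℕ) := this
          omega
        have : ¬(u p < u j) ∨ (w p : ℕ) < (u j : ℕ) := by
          rcases Nat.lt_or_ge (w p : ℕ) (u j : ℕ) with h | h
          · exact Or.inr h
          · left; intro hh; exact hnotQ ⟨hjp, hh, h⟩
        rcases this with h | h
        · have : (u j : ℕ) ≤ (u p : ℕ) := by
            rcases Nat.lt_or_ge (u p : ℕ) (u j : ℕ) with h' | h'
            · exact absurd (Fin.lt_def.2 h') h
            · exact h'
          constructor <;> intro <;> omega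
        · constructor <;> intro <;> omega
      -- w-side cross
      have hcw : Dm w i K + Dm w ((p : ℕ) + 1) k ≤ Dm w i k + Dm w ((p : ℕ) + 1) K := by
        apply Dm_cross_le (by omega) him
        intro j _ _ hKj
        omega
      -- boundary values
      have hbu1 := Dm_succ u p k
      have hbu2 := Dm_succ u p K
      have hbw1 := Dm_succ w p k
      have hbw2 := Dm_succ w p K
      have hpre1 := Dm_prefix_eq hppre k
      have hpre2 := Dm_prefix_eq hppre K
      have hdomiK := hdom i K
      have hgoal : Dm u i k < Dm w i k := by
        split_ifs at hbu1 hbu2 hbw1 hbw2 <;> omega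
      split_ifs at key <;> omega
    · have h1 := hdom i k
      split_ifs at key <;> omega
  · -- monotonicity
    intro i k
    have key := Dm_swap u hpq i k
    have : (u p : ℕ) < (u q : ℕ) := hasc
    split_ifs at key <;> omega
  · -- strict cell
    refine ⟨(p : ℕ) + 1, (u q : ℕ), by have := q.isLt; have : (p:ℕ) < q := hpq; omega,
      by have := (u q).isLt; omega, ?_⟩
    have key := Dm_swap u hpq ((p : ℕ) + 1) ((u q : ℕ))
    have h1 : (u p : ℕ) < (u q : ℕ) := hasc
    have h2 : (p : ℕ) < (q : ℕ) := hpq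
    split_ifs at key <;> omega

lemma dom_chain {u w : Equiv.Perm (Fin m)} (hdom : ∀ i k, Dm u i k ≤ Dm w i k) :
    Relation.ReflTransGen Rel1 u w := by
  classical
  set S := Finset.range (m + 1) ×ˢ Finset.range (m + 1) with hS
  suffices aux : ∀ n (u : Equiv.Perm (Fin m)),
      (∑ z ∈ S, (Dm w z.1 z.2 - Dm u z.1 z.2)) ≤ n →
      (∀ i k, Dm u i k ≤ Dm w i k) → Relation.ReflTransGen Rel1 u w by
    exact aux _ u le_rfl hdom
  intro n
  induction n with
  | zero =>
    intro u hM hdom'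
    by_cases heq : u = w
    · subst heq; exact Relation.ReflTransGen.refl
    · exfalso
      obtain ⟨u', hrel, hd1, hd2, i₀, k₀, hi₀, hk₀, hcell⟩ := dom_step hdom' heq
      have hmem : (i₀, k₀) ∈ S := by
        rw [hS]; simp [Finset.mem_product, Finset.mem_range]; omega
      have hpos : 1 ≤ Dm w i₀ k₀ - Dm u i₀ k₀ := by
        have := hd1 i₀ k₀; omega
      have hss := Finset.single_le_sum
        (f := fun z : ℕ × ℕ => Dm w z.1 z.2 - Dm u z.1 z.2)
        (fun z _ => Nat.zero_le _) hmem
      simp only at hss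
      omega
  | succ n IH =>
    intro u hM hdom'
    by_cases heq : u = w
    · subst heq; exact Relation.ReflTransGen.refl
    · obtain ⟨u', hrel, hd1, hd2, i₀, k₀, hi₀, hk₀, hcell⟩ := dom_step hdom' heq
      have hmem : (i₀, k₀) ∈ S := by
        rw [hS]; simp [Finset.mem_product, Finset.mem_range]; omega
      have hlt : (∑ z ∈ S, (Dm w z.1 z.2 - Dm u' z.1 z.2)) <
          (∑ z ∈ S, (Dm w z.1 z.2 - Dm u z.1 z.2)) := by
        apply Finset.sum_lt_sum
        · intro z _
          have h1 := hd2 z.1 z.2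
          have h2 := hd1 z.1 z.2
          omega
        · refine ⟨(i₀, k₀), hmem, ?_⟩
          have h2 := hd1 i₀ k₀
          simp only
          omega
      exact Relation.ReflTransGen.head hrel (IH u' (by omega) hd1)

lemma sublist_one_letter {α : Type*} {l L : List α} (h : l.Sublist L)
    (hlen : L.length = l.length + 1) :
    ∃ l₁ a l₂, L = l₁ ++ a :: l₂ ∧ l = l₁ ++ l₂ := by
  induction h with
  | slnil => simp at hlen
  | @cons l' L' a h IH =>
    have hl : l'.length = L'.length := by simp at hlen; omega
    have heq := h.eq_of_length hl
    subst heq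
    exact ⟨[], a, l', by simp, by simp⟩
  | @cons_cons l' L' a h IH =>
    obtain ⟨l₁, b, l₂, h1, h2⟩ := IH (by simp at hlen; omega)
    exact ⟨a :: l₁, b, l₂, by rw [h1]; rfl, by rw [h2]; rfl⟩

lemma cov_structure {σ τ : Equiv.Perm (Fin m)} (h : BruhatCov σ τ) :
    ∃ p q : Fin m, p < q ∧ σ p < σ q ∧
      (∀ r, p < r → r < q → ¬(σ p < σ r ∧ σ r < σ q)) ∧ τ = σ * Equiv.swap p q := by
  obtain ⟨⟨⟨lτ, hredτ, lσ, hsub, hredσ⟩, hne⟩, hnomid⟩ := h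
  rw [isReducedWord_iff] at hredτ hredσ
  obtain ⟨hadjτ, hprodτ, hlenτ⟩ := hredτ
  obtain ⟨hadjσ, hprodσ, hlenσ⟩ := hredσ
  have hlenle : lσ.length ≤ lτ.length := hsub.length_le
  have hlt : pinv σ < pinv τ := by
    rcases Nat.lt_or_ge (pinv σ) (pinv τ) with h | h
    · exact h
    · exfalso
      have : lσ = lτ := hsub.eq_of_length (by omega)
      apply hne
      rw [← hprodσ, ← hprodτ, this]
  have hgap : pinv τ = pinv σ + 1 := by
    by_contra hcon
    have hgap2 : pinv σ + 2 ≤ pinv τ := by omega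
    have hdom : ∀ i k, Dm σ i k ≤ Dm τ i k := by
      intro i k
      have := dom_of_sublist lτ lσ hadjτ hsub (by rw [hprodτ]; exact hlenτ)
        (by rw [hprodσ]; exact hlenσ) i k
      rwa [hprodσ, hprodτ] at this
    have hchain := dom_chain hdom
    rcases Relation.ReflTransGen.cases_tail hchain with h | ⟨u, hch, hrel⟩
    · exact hne h.symm
    · have hupinv : pinv τ = pinv u + 1 := Rel1.pinv_eq hrel
      have hneu : σ ≠ u := by
        intro hh; rw [← hh] at hupinv; omega
      apply hnomid
      refine ⟨u, ⟨?_, hneu⟩, ⟨?_, fun hh => by rw [hh] at hupinv; omega⟩⟩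
      · obtain ⟨lu, k1, k2, k3⟩ := exists_word_pinv u
        obtain ⟨lσ', s1, s2, s3, s4⟩ := chain_subword hch lu k1 k2 k3
        exact ⟨lu, isReducedWord_iff.2 ⟨k1, k2, k3⟩, lσ',
          s1, isReducedWord_iff.2 ⟨s2, s3, s4⟩⟩
      · obtain ⟨lu', s1, s2, s3, s4⟩ := chain_subword
          (Relation.ReflTransGen.single hrel) lτ hadjτ hprodτ hlenτ
        exact ⟨lτ, isReducedWord_iff.2 ⟨hadjτ, hprodτ, hlenτ⟩, lu',
          s1, isReducedWord_iff.2 ⟨s2, s3, s4⟩⟩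
  -- words differ by one letter
  obtain ⟨l₁, s, l₂, hdecomp, hshort⟩ :=
    sublist_one_letter hsub (by omega)
  obtain ⟨c, c', hcc, hsv⟩ := hadjτ s (by rw [hdecomp]; simp)
  have hcne : c ≠ c' := fun hh => by
    have := congrArg Fin.val hh; omega
  have hg : τ = σ * (l₂.prod⁻¹ * Equiv.swap c c' * l₂.prod) := by
    rw [← hprodτ, ← hprodσ, hdecomp, hshort, hsv]
    rw [List.prod_append, List.prod_append, List.prod_cons]
    group
  have hconj : l₂.prod⁻¹ * Equiv.swap c c' * l₂.prod =
      Equiv.swap (l₂.prod⁻¹ c) (l₂.prod⁻¹ c') := by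
    have := Equiv.swap_apply_apply (l₂.prod⁻¹ : Equiv.Perm (Fin m)) c c'
    rw [this]
    group
  rw [hconj] at hg
  set x := l₂.prod⁻¹ c with hxd
  set y := l₂.prod⁻¹ c' with hyd
  have hxy : x ≠ y := fun hh => hcne (l₂.prod⁻¹.injective hh)
  -- orient the transposition
  obtain ⟨p, q, hpq, hswap⟩ : ∃ p q : Fin m, p < q ∧ Equiv.swap x y = Equiv.swap p q := by
    rcases lt_or_gt_of_ne hxy with h | h
    · exact ⟨x, y, h, rfl⟩
    · exact ⟨y, x, h, Equiv.swap_comm x y⟩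
  rw [hswap] at hg
  have hvne : σ p ≠ σ q := fun hh => (ne_of_lt hpq) (σ.injective hh)
  have hasc : σ p < σ q := by
    rcases lt_or_gt_of_ne hvne with h | h
    · exact h
    · exfalso
      have := pinv_swap_descent_lt hpq h
      rw [← hg] at this
      omega
  refine ⟨p, q, hpq, hasc, ?_, hg⟩
  intro r h1 h2 hcon
  have := pinv_swap_ascent_two hpq hasc ⟨r, h1, h2, hcon.1, hcon.2⟩
  rw [← hg] at this
  omega


end BruhatAux


section final

variable {m : ℕ}

variable {σ τ : Equiv.Perm (Fin m)} {p q : Fin m}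

lemma rd_eq_of_structure (hpq : p < q) (hasc : σ p < σ q)
    (hR : ∀ r, p < r → r < q → ¬(σ p < σ r ∧ σ r < σ q))
    (hg : τ = σ * Equiv.swap p q) :
    ∀ i : Fin m, i ≠ p → i ≠ q → rd τ i = rd σ i := by
  intro i hip hiq
  have hτ : ∀ j, τ j = σ (Equiv.swap p q j) := by
    intro j; rw [hg]; rfl
  have hτi : τ i = σ i := by
    rw [hτ, Equiv.swap_apply_of_ne_of_ne hip hiq]
  rw [rd, rd, hτi]
  congr 1
  by_cases hmid : p < i ∧ i < q
  · -- pointwise congruence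
    refine congrArg Finset.card (Finset.filter_congr ?_)
    intro j _
    by_cases hjp : j = p
    · have hτj : τ j = σ q := by rw [hjp, hτ, Equiv.swap_apply_left]
      rw [hτj, hjp]
      have hnotmid := hR i hmid.1 hmid.2
      have h1 : (σ p : ℕ) < σ q := hasc
      have h2 : σ i ≠ σ p := fun hh => hip (σ.injective hh)
      have h3 : σ i ≠ σ q := fun hh => hiq (σ.injective hh)
      have h2' : (σ i : ℕ) ≠ (σ p : ℕ) := fun hh => h2 (Fin.ext hh)
      have h3' : (σ i : ℕ) ≠ (σ q : ℕ) := fun hh => h3 (Fin.ext hh)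
      have hside : (σ i : ℕ) < σ p ∨ (σ q : ℕ) < σ i := by
        by_contra hcon
        push_neg at hcon
        exact hnotmid ⟨Fin.lt_def.2 (by omega), Fin.lt_def.2 (by omega)⟩
      constructor
      · rintro ⟨ha, hb⟩
        have : (σ q : ℕ) < σ i := hb
        exact ⟨ha, Fin.lt_def.2 (by omega)⟩
      · rintro ⟨ha, hb⟩
        have : (σ p : ℕ) < σ i := hb
        exact ⟨ha, Fin.lt_def.2 (by omega)⟩
    · by_cases hjq : j = q
      · rw [hjq]
        have : ¬(q < i) := by
          have h1 : (i : ℕ) < (q : ℕ) := hmid.2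
          rw [Fin.lt_def]; omega
        constructor <;> (rintro ⟨ha, _⟩; exact absurd ha this)
      · rw [hτ, Equiv.swap_apply_of_ne_of_ne hjp hjq]
  · -- i < p or q < i : bijection by the swap
    have hcase : (i : ℕ) < p ∨ (q : ℕ) < i := by
      have h1 : (p : ℕ) < q := hpq
      have h2 : (i : ℕ) ≠ p := fun hh => hip (Fin.ext hh)
      have h3 : (i : ℕ) ≠ q := fun hh => hiq (Fin.ext hh)
      rw [not_and_or] at hmid
      rcases hmid with h | h
      · left; rw [Fin.lt_def] at h; push_neg at h; omega
      · rw [Fin.lt_def] at h; push_neg at h; omega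
    have hswaplt : ∀ j : Fin m, j < i → Equiv.swap p q j < i := by
      intro j hj
      have hj' : (j : ℕ) < i := hj
      have h1 : (p : ℕ) < q := hpq
      by_cases h2 : j = p
      · subst h2
        have : (q : ℕ) < i := by rcases hcase with h | h <;> omega
        rw [Equiv.swap_apply_left]
        exact Fin.lt_def.2 this
      · by_cases h3 : j = q
        · subst h3
          have : (p : ℕ) < i := by omega
          rw [Equiv.swap_apply_right]
          exact Fin.lt_def.2 this
        · rw [Equiv.swap_apply_of_ne_of_ne h2 h3]
          exact hj
    apply Finset.card_bij' (fun j _ => Equiv.swap p q j) (fun j _ => Equiv.swap p q j)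
    · intro j hj
      simp only [Finset.mem_filter, Finset.mem_univ, true_and] at hj ⊢
      refine ⟨hswaplt j hj.1, ?_⟩
      rw [← hτ j]
      exact hj.2
    · intro j hj
      simp only [Finset.mem_filter, Finset.mem_univ, true_and] at hj ⊢
      refine ⟨hswaplt j hj.1, ?_⟩
      rw [hτ, Equiv.swap_apply_self]
      exact hj.2
    · intro j _; exact Equiv.swap_apply_self _ _ _
    · intro j _; exact Equiv.swap_apply_self _ _ _

lemma rd_ineq1 (hpq : p < q) (hasc : σ p < σ q)
    (hg : τ = σ * Equiv.swap p q) : rd σ p ≤ rd τ q := by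
  have hτ : ∀ j, τ j = σ (Equiv.swap p q j) := by
    intro j; rw [hg]; rfl
  have hτq : τ q = σ p := by rw [hτ, Equiv.swap_apply_right]
  rw [rd, rd, hτq]
  have hsub : (Finset.univ.filter (fun j : Fin m => j < p ∧ σ j < σ p)) ⊆
      (Finset.univ.filter (fun j : Fin m => j < q ∧ τ j < τ q)) := by
    intro j hj
    simp only [Finset.mem_filter, Finset.mem_univ, true_and] at hj ⊢
    obtain ⟨h1, h2⟩ := hj
    have hjp : j ≠ p := ne_of_lt h1
    have hjq : j ≠ q := ne_of_lt (h1.trans hpq)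
    refine ⟨h1.trans hpq, ?_⟩
    rw [hτ, Equiv.swap_apply_of_ne_of_ne hjp hjq, hτq]
    exact h2
  have := Finset.card_le_card hsub
  rw [hτq] at this
  omega

lemma rd_ineq2 (hpq : p < q) (hasc : σ p < σ q)
    (hg : τ = σ * Equiv.swap p q) : rd τ p + 1 ≤ rd σ q := by
  have hτ : ∀ j, τ j = σ (Equiv.swap p q j) := by
    intro j; rw [hg]; rfl
  have hτp : τ p = σ q := by rw [hτ, Equiv.swap_apply_left]
  rw [rd, rd, hτp]
  have hpnot : p ∉ (Finset.univ.filter (fun j : Fin m => j < p ∧ τ j < σ q)) := by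
    simp [lt_irrefl]
  have hsub : insert p (Finset.univ.filter (fun j : Fin m => j < p ∧ τ j < σ q)) ⊆
      (Finset.univ.filter (fun j : Fin m => j < q ∧ σ j < σ q)) := by
    intro j hj
    rcases Finset.mem_insert.1 hj with rfl | hj
    · simp only [Finset.mem_filter, Finset.mem_univ, true_and]
      exact ⟨hpq, hasc⟩
    · simp only [Finset.mem_filter, Finset.mem_univ, true_and] at hj ⊢
      obtain ⟨h1, h2⟩ := hj
      have hjp : j ≠ p := ne_of_lt h1
      have hjq : j ≠ q := ne_of_lt (h1.trans hpq)
      rw [hτ, Equiv.swap_apply_of_ne_of_ne hjp hjq] at h2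
      exact ⟨h1.trans hpq, h2⟩
  have h1 := Finset.card_le_card hsub
  rw [Finset.card_insert_of_notMem hpnot] at h1
  omega

end final


/-- If `(σ, τ)` is a covering pair of the Bruhat order on `S_m`, then for every cache size
`c ≤ m` the number of cache hits changes by at most one: `|hits_c(τ) − hits_c(σ)| ≤ 1`. -/
theorem hits_change_le_one_of_bruhatCov (m : ℕ) (σ τ : Equiv.Perm (Fin m))
    (h : BruhatCov σ τ) (c : ℕ) (hc : c ≤ m) :
    |(hits c τ : ℤ) - (hits c σ : ℤ)| ≤ 1 := by
  obtain ⟨p, q, hpq, hasc, hR, hg⟩ := cov_structure h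
  have hrdeq := rd_eq_of_structure hpq hasc hR hg
  have h1 := rd_ineq1 hpq hasc hg
  have h2 := rd_ineq2 hpq hasc hg
  have hcast : ∀ x : Equiv.Perm (Fin m),
      (hits c x : ℤ) = ∑ i : Fin m, (if rd x i ≤ c then (1 : ℤ) else 0) := by
    intro x
    rw [hits, Finset.card_filter]
    push_cast
    rfl
  set f : Fin m → ℤ := fun i =>
    (if rd τ i ≤ c then (1 : ℤ) else 0) - (if rd σ i ≤ c then (1 : ℤ) else 0) with hf
  have hdiff : (hits c τ : ℤ) - (hits c σ : ℤ) = ∑ i : Fin m, f i := by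
    rw [hcast, hcast, ← Finset.sum_sub_distrib]
  have hqmem : q ∈ Finset.univ.erase p :=
    Finset.mem_erase.2 ⟨(ne_of_lt hpq).symm, Finset.mem_univ q⟩
  have hsum : ∑ i : Fin m, f i = f p + (f q +
      ∑ i ∈ (Finset.univ.erase p).erase q, f i) := by
    rw [Finset.add_sum_erase _ f hqmem, Finset.add_sum_erase _ f (Finset.mem_univ p)]
  have hzero : ∑ i ∈ (Finset.univ.erase p).erase q, f i = 0 := by
    apply Finset.sum_eq_zero
    intro i hi
    rw [Finset.mem_erase, Finset.mem_erase] at hi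
    rw [hf]
    simp only
    rw [hrdeq i hi.2.1 hi.1]
    ring
  rw [hdiff, hsum, hzero, add_zero, hf]
  simp only
  rw [abs_le]
  constructor <;> (split_ifs <;> omega)
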